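/- Let Ψ ∈ ℝ^{n×n} be symmetric positive semidefinite of rank ñ, with spectral decomposition Ψ = Q Λ Qᵀ where Q ∈ ℝ^{n×ñ} has orthonormal columns and Λ ∈ ℝ^{ñ×ñ} is diagonal with positive diagonal entries. Let K ∈ ℝ^{m×n} and set K̃ = K Q Λ^{1/2} ∈ ℝ^{m×ñ}. Then the infimum over D ∈ ℝ^{n×Z}, E ∈ ℝ^{Z×n} of Tr(K(I − DE) Ψ (I − DE)ᵀ Kᵀ) equals the infimum over D̃ ∈ ℝ^{ñ×Z}, Ẽ ∈ ℝ^{Z×ñ} of Tr(K̃(I − D̃Ẽ)(I − D̃Ẽ)ᵀ K̃ᵀ). -/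

import Mathlib

open Matrix

lemma trace_mul_transpose_nonneg' {m k : ℕ} (A : Matrix (Fin m) (Fin k) ℝ) :
    0 ≤ (A * Aᵀ).trace := by
  have h : (A * Aᵀ).trace = ∑ i, ∑ j, (A i j)^2 := by
    simp [Matrix.trace, Matrix.mul_apply, Matrix.diag, sq]
  rw [h]
  positivity

lemma exists_proj' {m k : ℕ} (A : Matrix (Fin m) (Fin k) ℝ) :
    ∃ P : Matrix (Fin m) (Fin m) ℝ, Pᵀ = P ∧ P * P = P ∧ P * A = A ∧
      ∀ v : Fin m → ℝ, ∃ u : Fin k → ℝ, P *ᵥ v = A *ᵥ u := by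
  classical
  set U : Submodule ℝ (EuclideanSpace ℝ (Fin m)) :=
    LinearMap.range (Matrix.toEuclideanLin A) with hU
  set f : EuclideanSpace ℝ (Fin m) →ₗ[ℝ] EuclideanSpace ℝ (Fin m) :=
    U.subtype ∘ₗ (U.orthogonalProjection : EuclideanSpace ℝ (Fin m) →L[ℝ] U).toLinearMap with hf
  set g : (Fin m → ℝ) →ₗ[ℝ] (Fin m → ℝ) :=
    (WithLp.linearEquiv 2 ℝ (Fin m → ℝ)).toLinearMap ∘ₗ f ∘ₗ
      (WithLp.linearEquiv 2 ℝ (Fin m → ℝ)).symm.toLinearMap with hg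
  set P : Matrix (Fin m) (Fin m) ℝ := LinearMap.toMatrix' g with hP
  have hmulv : ∀ v : Fin m → ℝ, P *ᵥ v = g v := by
    intro v
    rw [← Matrix.toLin'_apply, hP, Matrix.toLin'_toMatrix']
  -- g in terms of f, concretely
  have hgv : ∀ v : Fin m → ℝ, g v = (WithLp.equiv 2 (Fin m → ℝ))
      (f ((WithLp.equiv 2 (Fin m → ℝ)).symm v)) := fun v => rfl
  have hfmem : ∀ x : EuclideanSpace ℝ (Fin m), f x ∈ U := by
    intro x
    exact (U.orthogonalProjection x).2
  have hffix : ∀ x : EuclideanSpace ℝ (Fin m), x ∈ U → f x = x := by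
    intro x hx
    exact Submodule.starProjection_eq_self_iff.mpr hx
  refine ⟨P, ?_, ?_, ?_, ?_⟩
  · -- symmetry
    ext i j
    have hinner : ∀ x : EuclideanSpace ℝ (Fin m), ∀ i : Fin m,
        (WithLp.equiv 2 (Fin m → ℝ)) x i =
          (inner ℝ x ((WithLp.equiv 2 (Fin m → ℝ)).symm (fun k => if k = i then 1 else 0)) : ℝ) := by
      intro x i
      rw [PiLp.inner_apply]
      simp
    have key : ∀ i j : Fin m, g (fun j' => if j' = j then 1 else 0) i
        = g (fun j' => if j' = i then 1 else 0) j := by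
      intro i j
      rw [hgv, hgv, hinner _ i, hinner _ j, hf]
      simp only [LinearMap.coe_comp, Function.comp_apply, Submodule.coe_subtype,
        ContinuousLinearMap.coe_coe]
      rw [show ∀ a b : EuclideanSpace ℝ (Fin m), inner ℝ (↑(U.orthogonalProjection a) : EuclideanSpace ℝ (Fin m)) b = inner ℝ a (↑(U.orthogonalProjection b) : EuclideanSpace ℝ (Fin m)) from fun a b => Submodule.inner_starProjection_left_eq_right (K := U) a b]
      rw [real_inner_comm]
    rw [Matrix.transpose_apply, hP, LinearMap.toMatrix'_apply, LinearMap.toMatrix'_apply]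
    have e : ∀ a : Fin m, (Pi.single a (1:ℝ) : Fin m → ℝ) = fun j' => if j' = a then 1 else 0 :=
      fun a => by ext j'; simp [Pi.single_apply]
    rw [e, e]
    exact key j i
  · -- idempotent
    ext i j
    have : (P * P) *ᵥ (fun j' => if j' = j then 1 else 0) = P *ᵥ (fun j' => if j' = j then 1 else 0) := by
      rw [← Matrix.mulVec_mulVec, hmulv, hmulv]
      rw [hgv, hgv]
      simp only [Equiv.symm_apply_apply]
      congr 1
      exact hffix _ (hfmem _)
    have h2 := congrFun this i
    simpa [Matrix.mulVec, dotProduct, Matrix.mul_apply] using h2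
  · -- P * A = A
    ext i j
    have hcol : (fun k => A k j) = A *ᵥ (fun j' => if j' = j then 1 else 0) := by
      ext k
      simp [Matrix.mulVec, dotProduct]
    have hfix : P *ᵥ (fun k => A k j) = (fun k => A k j) := by
      rw [hmulv, hgv]
      have hmem : (WithLp.equiv 2 (Fin m → ℝ)).symm (fun k => A k j) ∈ U := by
        rw [hU]
        refine ⟨(WithLp.equiv 2 (Fin k → ℝ)).symm (fun j' => if j' = j then 1 else 0), ?_⟩
        rw [Matrix.toEuclideanLin_apply]
        exact congrArg (WithLp.toLp 2) hcol.symm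
      rw [hffix _ hmem]
      simp
    have h2 := congrFun hfix i
    simpa [Matrix.mulVec, dotProduct, Matrix.mul_apply] using h2
  · -- range
    intro v
    obtain ⟨u, hu⟩ := hfmem ((WithLp.equiv 2 (Fin m → ℝ)).symm v)
    refine ⟨(WithLp.equiv 2 (Fin k → ℝ)) u, ?_⟩
    rw [hmulv, hgv, ← hu]
    have : Matrix.toEuclideanLin A u = (WithLp.equiv 2 (Fin m → ℝ)).symm (A *ᵥ (WithLp.equiv 2 (Fin k → ℝ)) u) :=
      Matrix.toEuclideanLin_apply A u
    rw [this]
    simp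

lemma key_le {m Z nt : ℕ} (Kt : Matrix (Fin m) (Fin nt) ℝ)
    (C : Matrix (Fin m) (Fin Z) ℝ) (E' : Matrix (Fin Z) (Fin nt) ℝ) :
    ∃ D' : Matrix (Fin nt) (Fin Z) ℝ,
      ((Kt * (1 - D' * E')) * (Kt * (1 - D' * E'))ᵀ).trace ≤
        ((Kt - C * E') * (Kt - C * E')ᵀ).trace := by
  obtain ⟨P, hPt, hPP, hPK, hrange⟩ := exists_proj' Kt
  choose u hu using fun j => hrange (fun i => C i j)
  refine ⟨Matrix.of (fun i j => u j i), ?_⟩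
  set D' : Matrix (Fin nt) (Fin Z) ℝ := Matrix.of (fun i j => u j i) with hD'
  have hKD : Kt * D' = P * C := by
    ext i j
    have h := congrFun (hu j) i
    simpa [Matrix.mul_apply, Matrix.mulVec, dotProduct, hD', mul_comm] using h.symm
  have hB : Kt * (1 - D' * E') = Kt - P * (C * E') := by
    rw [Matrix.mul_sub, Matrix.mul_one, ← Matrix.mul_assoc, hKD, Matrix.mul_assoc]
  set B := Kt - P * (C * E') with hBdef
  set M := P * (C * E') - C * E' with hMdef
  have hA : Kt - C * E' = B + M := by
    rw [hBdef, hMdef]; abel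
  have hPB : P * B = B := by
    rw [hBdef, Matrix.mul_sub, hPK, ← Matrix.mul_assoc, hPP]
  have hM1 : M = (P - 1) * (C * E') := by
    rw [Matrix.sub_mul, Matrix.one_mul, hMdef]
  have hBtP : Bᵀ * (P - 1) = 0 := by
    have h1 : (P - 1) * B = 0 := by rw [Matrix.sub_mul, hPB, Matrix.one_mul, sub_self]
    have h2 : (P - 1)ᵀ = P - 1 := by rw [Matrix.transpose_sub, Matrix.transpose_one, hPt]
    calc Bᵀ * (P - 1) = Bᵀ * (P - 1)ᵀ := by rw [h2]
      _ = ((P - 1) * B)ᵀ := by rw [Matrix.transpose_mul]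
      _ = 0 := by rw [h1, Matrix.transpose_zero]
  have hBtM : Bᵀ * M = 0 := by
    rw [hM1, ← Matrix.mul_assoc, hBtP, Matrix.zero_mul]
  have htrMB : (M * Bᵀ).trace = 0 := by
    rw [Matrix.trace_mul_comm, hBtM, Matrix.trace_zero]
  have htrBM : (B * Mᵀ).trace = 0 := by
    rw [← Matrix.trace_transpose, Matrix.transpose_mul, Matrix.transpose_transpose, htrMB]
  have hexp : (Kt - C * E') * (Kt - C * E')ᵀ = B * Bᵀ + B * Mᵀ + M * Bᵀ + M * Mᵀ := by
    rw [hA, Matrix.transpose_add, Matrix.add_mul, Matrix.mul_add, Matrix.mul_add]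
    abel
  rw [hB, hexp, Matrix.trace_add, Matrix.trace_add, Matrix.trace_add, htrBM, htrMB]
  have := trace_mul_transpose_nonneg' M
  linarith

theorem whitened_compression_loss_infimum
    (n m Z nt : ℕ) (hn : 0 < n) (hm : 0 < m) (hZ : 0 < Z) (hnt : 0 < nt)
    (hZn : Z ≤ n) (hntn : nt ≤ n)
    (Ψ : Matrix (Fin n) (Fin n) ℝ) (hΨ : Ψ.PosSemidef)
    (hrank : Ψ.rank = nt)
    (Q : Matrix (Fin n) (Fin nt) ℝ) (hQ : Qᵀ * Q = 1)
    (d : Fin nt → ℝ) (hd : ∀ i, 0 < d i)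
    (hdecomp : Ψ = Q * Matrix.diagonal d * Qᵀ)
    (K : Matrix (Fin m) (Fin n) ℝ) :
    sInf {l : ℝ | ∃ (D : Matrix (Fin n) (Fin Z) ℝ) (E : Matrix (Fin Z) (Fin n) ℝ),
        l = (K * (1 - D * E) * Ψ * (1 - D * E)ᵀ * Kᵀ).trace} =
      sInf {l : ℝ | ∃ (D' : Matrix (Fin nt) (Fin Z) ℝ) (E' : Matrix (Fin Z) (Fin nt) ℝ),
        l = ((K * Q * Matrix.diagonal fun i => Real.sqrt (d i)) * (1 - D' * E') *
              (1 - D' * E')ᵀ *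
              (K * Q * Matrix.diagonal fun i => Real.sqrt (d i))ᵀ).trace} := by
  set s : Fin nt → ℝ := fun i => Real.sqrt (d i) with hs
  set W : Matrix (Fin n) (Fin nt) ℝ := Q * Matrix.diagonal s with hW
  have hKt : K * Q * Matrix.diagonal s = K * W := by rw [hW, Matrix.mul_assoc]
  set Kt : Matrix (Fin m) (Fin nt) ℝ := K * Q * Matrix.diagonal s with hKtdef
  have hss : Matrix.diagonal s * Matrix.diagonal s = Matrix.diagonal d := by
    rw [Matrix.diagonal_mul_diagonal]
    exact congrArg Matrix.diagonal (funext fun i => Real.mul_self_sqrt (hd i).le)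
  have hΨW : Ψ = W * Wᵀ := by
    rw [hdecomp, hW, Matrix.transpose_mul, Matrix.diagonal_transpose, ← hss]
    simp only [Matrix.mul_assoc]
  have hsne : ∀ i, s i ≠ 0 := fun i => ne_of_gt (Real.sqrt_pos.mpr (hd i))
  have hsinv : Matrix.diagonal (fun i => (s i)⁻¹) * Matrix.diagonal s = 1 := by
    rw [Matrix.diagonal_mul_diagonal, ← Matrix.diagonal_one]
    exact congrArg Matrix.diagonal (funext fun i => inv_mul_cancel₀ (hsne i))
  -- value rewriting
  have hval1 : ∀ (D : Matrix (Fin n) (Fin Z) ℝ) (E : Matrix (Fin Z) (Fin n) ℝ),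
      K * (1 - D * E) * Ψ * (1 - D * E)ᵀ * Kᵀ
        = (K * (1 - D * E) * W) * (K * (1 - D * E) * W)ᵀ := by
    intro D E
    rw [hΨW]
    simp [Matrix.transpose_mul, Matrix.mul_assoc]
  have hval2 : ∀ (D' : Matrix (Fin nt) (Fin Z) ℝ) (E' : Matrix (Fin Z) (Fin nt) ℝ),
      Kt * (1 - D' * E') * (1 - D' * E')ᵀ * Ktᵀ
        = (Kt * (1 - D' * E')) * (Kt * (1 - D' * E'))ᵀ := by
    intro D' E'
    simp [Matrix.transpose_mul, Matrix.mul_assoc]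
  have hsplit : ∀ (D : Matrix (Fin n) (Fin Z) ℝ) (E : Matrix (Fin Z) (Fin n) ℝ),
      K * (1 - D * E) * W = K * W - (K * D) * (E * W) := by
    intro D E
    simp [Matrix.mul_sub, Matrix.sub_mul, Matrix.mul_assoc]
  -- bounds
  have hbdd1 : BddBelow {l : ℝ | ∃ (D : Matrix (Fin n) (Fin Z) ℝ) (E : Matrix (Fin Z) (Fin n) ℝ),
      l = (K * (1 - D * E) * Ψ * (1 - D * E)ᵀ * Kᵀ).trace} := by
    refine ⟨0, ?_⟩
    rintro x ⟨D, E, rfl⟩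
    rw [hval1]
    exact trace_mul_transpose_nonneg' _
  have hbdd2 : BddBelow {l : ℝ | ∃ (D' : Matrix (Fin nt) (Fin Z) ℝ) (E' : Matrix (Fin Z) (Fin nt) ℝ),
      l = (Kt * (1 - D' * E') * (1 - D' * E')ᵀ * Ktᵀ).trace} := by
    refine ⟨0, ?_⟩
    rintro x ⟨D', E', rfl⟩
    rw [hval2]
    exact trace_mul_transpose_nonneg' _
  have hne1 : {l : ℝ | ∃ (D : Matrix (Fin n) (Fin Z) ℝ) (E : Matrix (Fin Z) (Fin n) ℝ),
      l = (K * (1 - D * E) * Ψ * (1 - D * E)ᵀ * Kᵀ).trace}.Nonempty := ⟨_, 0, 0, rfl⟩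
  have hne2 : {l : ℝ | ∃ (D' : Matrix (Fin nt) (Fin Z) ℝ) (E' : Matrix (Fin Z) (Fin nt) ℝ),
      l = (Kt * (1 - D' * E') * (1 - D' * E')ᵀ * Ktᵀ).trace}.Nonempty := ⟨_, 0, 0, rfl⟩
  apply le_antisymm
  · -- sInf S1 ≤ sInf S2 : every value of S2 is a value of S1
    refine le_csInf hne2 ?_
    rintro b ⟨D', E', rfl⟩
    refine csInf_le hbdd1 ⟨W * D', E' * Matrix.diagonal (fun i => (s i)⁻¹) * Qᵀ, ?_⟩
    rw [hval1, hval2]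
    have hQtW : Qᵀ * W = Matrix.diagonal s := by
      rw [hW, ← Matrix.mul_assoc, hQ, Matrix.one_mul]
    have hEW : (E' * Matrix.diagonal (fun i => (s i)⁻¹) * Qᵀ) * W = E' := by
      rw [Matrix.mul_assoc, hQtW, Matrix.mul_assoc, hsinv, Matrix.mul_one]
    have hKD : K * (W * D') = Kt * D' := by
      rw [hKt, ← Matrix.mul_assoc]
    have hA : K * (1 - (W * D') * (E' * Matrix.diagonal (fun i => (s i)⁻¹) * Qᵀ)) * W
        = Kt * (1 - D' * E') := by
      rw [hsplit, hEW, hKD, ← hKt, Matrix.mul_sub, Matrix.mul_one, Matrix.mul_assoc]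
    rw [hA]
  · -- sInf S2 ≤ sInf S1
    refine le_csInf hne1 ?_
    rintro b ⟨D, E, rfl⟩
    obtain ⟨D', hD'⟩ := key_le Kt (K * D) (E * W)
    refine le_trans (csInf_le hbdd2 ⟨D', E * W, rfl⟩) ?_
    rw [hval1, hval2, hsplit]
    have : K * W = Kt := hKt.symm
    rw [this]
    exact hD'
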